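/- For a semigroup S: (1) H_L(S) = 1 if and only if H_J(S) = 1 and S is left stable; (2) H_R(S) = 1 if and only if H_J(S) = 1 and S is right stable. -/

import Mathlib

namespace GreenHeights

universe u

section Defs

variable {S : Type u} [Semigroup S]

/-- Green's preorder `≤_L`: `a ≤_L b` iff `a = s * b` for some `s ∈ S¹`
(i.e. `a = b` or `a = s * b` for some `s ∈ S`). -/
def leL (a b : S) : Prop := a = b ∨ ∃ s : S, a = s * b

/-- Green's preorder `≤_R`: `a ≤_R b` iff `a = b * s` for some `s ∈ S¹`. -/
def leR (a b : S) : Prop := a = b ∨ ∃ s : S, a = b * s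

/-- Green's preorder `≤_J`: `a ≤_J b` iff `a = s * b * t` for some `s, t ∈ S¹`. -/
def leJ (a b : S) : Prop :=
  a = b ∨ (∃ s : S, a = s * b) ∨ (∃ t : S, a = b * t) ∨ ∃ s t : S, a = s * b * t

/-- Green's preorder `≤_H`. -/
def leH (a b : S) : Prop := leL a b ∧ leR a b

/-- Green's relation `L`. -/
def eqvL (a b : S) : Prop := leL a b ∧ leL b a

/-- Green's relation `R`. -/
def eqvR (a b : S) : Prop := leR a b ∧ leR b a

/-- Green's relation `J`. -/
def eqvJ (a b : S) : Prop := leJ a b ∧ leJ b a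

/-- Green's relation `H`. -/
def eqvH (a b : S) : Prop := leH a b ∧ leH b a

/-- `a <_L b`. -/
def ltL (a b : S) : Prop := leL a b ∧ ¬ leL b a

/-- `a <_R b`. -/
def ltR (a b : S) : Prop := leR a b ∧ ¬ leR b a

/-- `a <_J b`. -/
def ltJ (a b : S) : Prop := leJ a b ∧ ¬ leJ b a

/-- `a <_H b`. -/
def ltH (a b : S) : Prop := leH a b ∧ ¬ leH b a

end Defs

/-- The set of lengths of strictly decreasing chains with respect to a relation `lt`:
`m` is a chain length if there is a sequence `c 0 >' c 1 >' … >' c (m-1)`. -/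
def chainLengths {T : Type u} (lt : T → T → Prop) : Set ℕ :=
  {m | ∃ c : Fin m → T, ∀ i j : Fin m, i < j → lt (c j) (c i)}

/-- The height: the supremum, in `ℕ∞`, of the lengths of strictly decreasing chains. -/
noncomputable def heightOf {T : Type u} (lt : T → T → Prop) : ℕ∞ :=
  ⨆ m ∈ chainLengths lt, (m : ℕ∞)

/-- The `L`-height of a semigroup. -/
noncomputable def HL (S : Type u) [Semigroup S] : ℕ∞ := heightOf (ltL (S := S))

/-- The `R`-height of a semigroup. -/
noncomputable def HR (S : Type u) [Semigroup S] : ℕ∞ := heightOf (ltR (S := S))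

/-- The `J`-height of a semigroup. -/
noncomputable def HJ (S : Type u) [Semigroup S] : ℕ∞ := heightOf (ltJ (S := S))

/-- The `H`-height of a semigroup. -/
noncomputable def HH (S : Type u) [Semigroup S] : ℕ∞ := heightOf (ltH (S := S))

/-- `S` is left stable if `a ≤_L b` and `a J b` imply `a L b`. -/
def LeftStable (S : Type u) [Semigroup S] : Prop :=
  ∀ a b : S, leL a b → eqvJ a b → eqvL a b

/-- `S` is right stable if `a ≤_R b` and `a J b` imply `a R b`. -/
def RightStable (S : Type u) [Semigroup S] : Prop :=
  ∀ a b : S, leR a b → eqvJ a b → eqvR a b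

/-- `S` is stable if it is both left and right stable. -/
def Stable (S : Type u) [Semigroup S] : Prop := LeftStable S ∧ RightStable S

lemma heightOf_eq_one_iff {T : Type u} (lt : T → T → Prop) :
    heightOf lt = 1 ↔ Nonempty T ∧ ∀ a b : T, ¬ lt a b := by
  constructor
  · intro h
    have hbound : ∀ m ∈ chainLengths lt, (m : ℕ∞) ≤ 1 := by
      intro m hm
      calc (m : ℕ∞) ≤ heightOf lt := le_biSup _ hm
        _ = 1 := h
    constructor
    · by_contra hne
      have hA : ∀ m ∈ chainLengths lt, m = 0 := by
        intro m hm
        obtain ⟨c, -⟩ := hm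
        by_contra hm0
        exact hne ⟨c ⟨0, Nat.pos_of_ne_zero hm0⟩⟩
      have : heightOf lt = 0 := by
        refine le_antisymm ?_ zero_le
        refine iSup₂_le fun m hm => ?_
        simp [hA m hm]
      rw [h] at this
      exact one_ne_zero this
    · intro a b hab
      have h2 : 2 ∈ chainLengths lt := by
        refine ⟨fun i => if i = 0 then b else a, ?_⟩
        intro i j hij
        have hi : i = 0 := by omega
        have hj : j = 1 := by omega
        simp [hi, hj, hab]
      have := hbound 2 h2
      norm_num at this
  · rintro ⟨⟨x⟩, hno⟩
    refine le_antisymm ?_ ?_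
    · refine iSup₂_le fun m hm => ?_
      obtain ⟨c, hc⟩ := hm
      have hm1 : m ≤ 1 := by
        by_contra hm1
        exact hno _ _ (hc ⟨0, by omega⟩ ⟨1, by omega⟩ (by simp))
      exact_mod_cast hm1
    · have h1 : 1 ∈ chainLengths lt := ⟨fun _ => x, fun i j hij => absurd hij (by omega)⟩
      calc (1 : ℕ∞) = ((1 : ℕ) : ℕ∞) := by norm_num
        _ ≤ heightOf lt := le_biSup _ h1

section Aux

variable {S : Type u} [Semigroup S]

lemma leL_leJ {a b : S} (h : leL a b) : leJ a b := by
  rcases h with h | h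
  · exact Or.inl h
  · exact Or.inr (Or.inl h)

lemma leR_leJ {a b : S} (h : leR a b) : leJ a b := by
  rcases h with h | h
  · exact Or.inl h
  · exact Or.inr (Or.inr (Or.inl h))

/-- If there are no strict `L`-pairs, then `≤_J` is universal. -/
lemma leJ_of_noLtL (h : ∀ a b : S, leL a b → leL b a) (b x : S) : leJ b x := by
  have h1 : leL (x * b) b := Or.inr ⟨x, rfl⟩
  rcases h _ _ h1 with h2 | ⟨v, h2⟩
  · exact Or.inr (Or.inr (Or.inl ⟨b, h2⟩))
  · exact Or.inr (Or.inr (Or.inr ⟨v, b, by rw [mul_assoc]; exact h2⟩))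

/-- If there are no strict `R`-pairs, then `≤_J` is universal. -/
lemma leJ_of_noLtR (h : ∀ a b : S, leR a b → leR b a) (b x : S) : leJ b x := by
  have h1 : leR (b * x) b := Or.inr ⟨x, rfl⟩
  rcases h _ _ h1 with h2 | ⟨v, h2⟩
  · exact Or.inr (Or.inl ⟨b, h2⟩)
  · exact Or.inr (Or.inr (Or.inr ⟨b, v, h2⟩))

end Aux

/-- `H_L(S) = 1` iff `H_J(S) = 1` and `S` is left stable; dually for `R`. -/
theorem height_one_characterisation (S : Type u) [Semigroup S] :
    (HL S = 1 ↔ HJ S = 1 ∧ LeftStable S) ∧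
    (HR S = 1 ↔ HJ S = 1 ∧ RightStable S) := by
  rw [HL, HR, HJ, heightOf_eq_one_iff, heightOf_eq_one_iff, heightOf_eq_one_iff]
  have hlt : ∀ (le : S → S → Prop) (a b : S),
      (¬ (le a b ∧ ¬ le b a)) ↔ (le a b → le b a) := by
    intro le a b; tauto
  constructor
  · constructor
    · rintro ⟨hne, hL⟩
      have hL' : ∀ a b : S, leL a b → leL b a := fun a b h =>
        ((hlt leL a b).mp (hL a b)) h
      refine ⟨⟨hne, fun a b => (hlt leJ a b).mpr fun _ => leJ_of_noLtL hL' b a⟩, ?_⟩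
      intro a b hab _
      exact ⟨hab, hL' a b hab⟩
    · rintro ⟨⟨hne, hJ⟩, hstab⟩
      refine ⟨hne, fun a b => ?_⟩
      rw [ltL, hlt leL a b]
      intro hab
      have hJab : leJ a b := leL_leJ hab
      have hJba : leJ b a := (hlt leJ a b).mp (hJ a b) hJab
      exact (hstab a b hab ⟨hJab, hJba⟩).2
  · constructor
    · rintro ⟨hne, hR⟩
      have hR' : ∀ a b : S, leR a b → leR b a := fun a b h =>
        ((hlt leR a b).mp (hR a b)) h
      refine ⟨⟨hne, fun a b => (hlt leJ a b).mpr fun _ => leJ_of_noLtR hR' b a⟩, ?_⟩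
      intro a b hab _
      exact ⟨hab, hR' a b hab⟩
    · rintro ⟨⟨hne, hJ⟩, hstab⟩
      refine ⟨hne, fun a b => ?_⟩
      rw [ltR, hlt leR a b]
      intro hab
      have hJab : leJ a b := leR_leJ hab
      have hJba : leJ b a := (hlt leJ a b).mp (hJ a b) hJab
      exact (hstab a b hab ⟨hJab, hJba⟩).2

end GreenHeights
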